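/- Let a, b, c, d > 0 and define G : ℝ²_{>0} → ℝ² by G(x, y) = ((a − bx − xy)/y, (c − dy + xy)/y). Then G is differentiable at every point (x, y) with x > 0, y > 0, and the divergence of G there (the trace of its Fréchet derivative) equals (1/y)·(−b − y − c/y), which is strictly negative. -/

import Mathlib

lemma trace_prod (L : (ℝ × ℝ) →ₗ[ℝ] (ℝ × ℝ)) :
    LinearMap.trace ℝ (ℝ × ℝ) L = (L (1,0)).1 + (L (0,1)).2 := by
  rw [LinearMap.trace_eq_matrix_trace ℝ (Module.Basis.finTwoProd ℝ)]
  simp [Matrix.trace, Fin.sum_univ_two, LinearMap.toMatrix_apply, Module.Basis.finTwoProd_zero,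
    Module.Basis.finTwoProd_one]


/-- The Dulac-rescaled vector field `G(x,y) = ((a − bx − xy)/y, (c − dy + xy)/y)` is
differentiable at every point of the open positive quadrant, and its divergence there
(the trace of its Fréchet derivative) equals `(1/y)(−b − y − c/y) < 0`. -/
theorem stmt_3 (a b c d : ℝ) (ha : 0 < a) (hb : 0 < b) (hc : 0 < c) (hd : 0 < d)
    (G : ℝ × ℝ → ℝ × ℝ)
    (hG : ∀ p : ℝ × ℝ, G p = ((a - b * p.1 - p.1 * p.2) / p.2,
                              (c - d * p.2 + p.1 * p.2) / p.2)) :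
    ∀ p : ℝ × ℝ, 0 < p.1 → 0 < p.2 →
      DifferentiableAt ℝ G p ∧
      LinearMap.trace ℝ (ℝ × ℝ) (fderiv ℝ G p).toLinearMap
        = (1 / p.2) * (-b - p.2 - c / p.2) ∧
      LinearMap.trace ℝ (ℝ × ℝ) (fderiv ℝ G p).toLinearMap < 0 := by
  intro p hx hy
  have hGe : G = fun q : ℝ × ℝ => ((a - b * q.1 - q.1 * q.2) * (q.2)⁻¹,
      (c - d * q.2 + q.1 * q.2) * (q.2)⁻¹) := by
    funext q; rw [hG q]; simp [div_eq_mul_inv]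
  have hy0 : p.2 ≠ 0 := ne_of_gt hy
  have hfst : HasFDerivAt (fun q : ℝ × ℝ => q.1) (ContinuousLinearMap.fst ℝ ℝ ℝ) p :=
    hasFDerivAt_fst
  have hsnd : HasFDerivAt (fun q : ℝ × ℝ => q.2) (ContinuousLinearMap.snd ℝ ℝ ℝ) p :=
    hasFDerivAt_snd
  have hinv : HasFDerivAt (fun q : ℝ × ℝ => (q.2)⁻¹)
      ((-(p.2 ^ 2)⁻¹) • ContinuousLinearMap.snd ℝ ℝ ℝ) p := by
    have := (hasDerivAt_inv hy0).comp_hasFDerivAt p hsnd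
    exact this
  have h1 := (((hasFDerivAt_const a p).sub (hfst.const_mul b)).sub
      (hfst.mul hsnd)).mul hinv
  have h2 := (((hasFDerivAt_const c p).sub (hsnd.const_mul d)).add
      (hfst.mul hsnd)).mul hinv
  have H : HasFDerivAt G _ p := hGe ▸ (HasFDerivAt.prodMk h1 h2)
  have hfd := H.fderiv
  have key : LinearMap.trace ℝ (ℝ × ℝ) (fderiv ℝ G p).toLinearMap
      = (1 / p.2) * (-b - p.2 - c / p.2) := by
    rw [hfd, trace_prod]
    simp only [ContinuousLinearMap.coe_prod, LinearMap.prod_apply, Function.prod,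
      ContinuousLinearMap.coe_coe, ContinuousLinearMap.smul_apply,
      ContinuousLinearMap.sub_apply, ContinuousLinearMap.add_apply,
      ContinuousLinearMap.zero_apply,
      ContinuousLinearMap.coe_fst', ContinuousLinearMap.coe_snd', smul_eq_mul,
      Pi.add_apply, Pi.sub_apply, Pi.mul_apply]
    field_simp
    ring
  refine ⟨H.differentiableAt, key, ?_⟩
  rw [key]
  have h1 : 0 < 1 / p.2 := by positivity
  have h2 : -b - p.2 - c / p.2 < 0 := by
    have : 0 < c / p.2 := by positivity
    linarith
  exact mul_neg_of_pos_of_neg h1 h2
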